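/- The function φ : (−∞, log 2] → ℝ defined by φ(t) = f(h₂⁻¹(t)) for t ∈ [0, log 2], where f(y) = −(1−y) log(1−y), and φ(t) = 0 for t < 0, is convex on (−∞, log 2]. -/

import Mathlib

/-- The binary entropy function (natural logarithm). -/
noncomputable def binEnt (x : ℝ) : ℝ := -(x * Real.log x) - (1 - x) * Real.log (1 - x)

/-- The function `f(y) = -(1-y) log(1-y)`. -/
noncomputable def fFun (y : ℝ) : ℝ := -((1 - y) * Real.log (1 - y))

open Real Set Filter Topology

lemma binEnt_eq_binEntropy : binEnt = Real.binEntropy := by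
  funext x
  simp only [binEnt, Real.binEntropy, Real.log_inv]
  ring

lemma binEnt_zero : binEnt 0 = 0 := by simp [binEnt]

lemma binEnt_half : binEnt (1 / 2) = Real.log 2 := by
  rw [binEnt_eq_binEntropy, show (1 : ℝ) / 2 = 2⁻¹ by norm_num, Real.binEntropy_two_inv]

lemma binEnt_strictMonoOn : StrictMonoOn binEnt (Icc 0 (1 / 2)) := by
  rw [binEnt_eq_binEntropy, show (1 : ℝ) / 2 = 2⁻¹ by norm_num]
  exact Real.binEntropy_strictMonoOn

lemma binEnt_continuous : Continuous binEnt := by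
  rw [binEnt_eq_binEntropy]; exact Real.binEntropy_continuous

lemma binEnt_le_log_two (x : ℝ) : binEnt x ≤ Real.log 2 := by
  rw [binEnt_eq_binEntropy]; exact Real.binEntropy_le_log_two

lemma binEnt_mem_T {x : ℝ} (hx : x ∈ Icc (0 : ℝ) (1 / 2)) :
    binEnt x ∈ Icc (0 : ℝ) (Real.log 2) := by
  constructor
  · rw [binEnt_eq_binEntropy]
    exact Real.binEntropy_nonneg hx.1 (by linarith [hx.2])
  · exact binEnt_le_log_two x

lemma hasDerivAt_binEnt {x : ℝ} (h0 : x ≠ 0) (h1 : x ≠ 1) :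
    HasDerivAt binEnt (Real.log (1 - x) - Real.log x) x := by
  rw [binEnt_eq_binEntropy]; exact Real.hasDerivAt_binEntropy h0 h1

lemma hasDerivAt_fFun {x : ℝ} (h1 : x ≠ 1) :
    HasDerivAt fFun (1 + Real.log (1 - x)) x := by
  have h1' : (1 : ℝ) - x ≠ 0 := sub_ne_zero.mpr (Ne.symm h1)
  have h : HasDerivAt (fun y : ℝ => 1 - y) (-1) x := by
    simpa using (hasDerivAt_id x).const_sub 1
  have hlog : HasDerivAt (fun y : ℝ => Real.log (1 - y)) ((1 - x)⁻¹ * (-1)) x :=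
    (Real.hasDerivAt_log h1').comp x h
  have hmul := (h.mul hlog).neg
  have : fFun = fun y : ℝ => -((1 - y) * Real.log (1 - y)) := rfl
  rw [this]
  refine hmul.congr_deriv ?_
  have hc := mul_inv_cancel₀ h1'
  linear_combination hc

noncomputable def rAux (x : ℝ) : ℝ :=
  (1 + Real.log (1 - x)) / (Real.log (1 - x) - Real.log x)

lemma rAux_hasDerivAt_nonneg {x : ℝ} (hx : x ∈ Ioo (0 : ℝ) (1 / 2)) :
    ∃ d, HasDerivAt rAux d x ∧ 0 ≤ d := by
  obtain ⟨hx0, hx2⟩ := hx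
  have h1x : (0 : ℝ) < 1 - x := by linarith
  have hx0' : x ≠ 0 := ne_of_gt hx0
  have h1x' : (1 : ℝ) - x ≠ 0 := ne_of_gt h1x
  have hD : 0 < Real.log (1 - x) - Real.log x := by
    have h := Real.log_lt_log hx0 (by linarith : x < 1 - x)
    linarith
  have hDne : Real.log (1 - x) - Real.log x ≠ 0 := ne_of_gt hD
  have hsub : HasDerivAt (fun y : ℝ => 1 - y) (-1) x := by
    simpa using (hasDerivAt_id x).const_sub 1
  have hlog1 : HasDerivAt (fun y : ℝ => Real.log (1 - y)) ((1 - x)⁻¹ * (-1)) x :=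
    (Real.hasDerivAt_log h1x').comp x hsub
  have hN : HasDerivAt (fun y : ℝ => 1 + Real.log (1 - y)) ((1 - x)⁻¹ * (-1)) x :=
    hlog1.const_add 1
  have hDd : HasDerivAt (fun y : ℝ => Real.log (1 - y) - Real.log y)
      ((1 - x)⁻¹ * (-1) - x⁻¹) x := hlog1.sub (Real.hasDerivAt_log hx0')
  have hdiv := hN.div hDd hDne
  refine ⟨_, hdiv, ?_⟩
  apply div_nonneg _ (sq_nonneg _)
  have hbe : binEnt x < 1 :=
    lt_of_le_of_lt (binEnt_le_log_two x)
      (lt_trans Real.log_two_lt_d9 (by norm_num))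
  have key : (1 - x)⁻¹ * (-1) * (Real.log (1 - x) - Real.log x) -
      (1 + Real.log (1 - x)) * ((1 - x)⁻¹ * (-1) - x⁻¹)
      = (1 - binEnt x) * (x⁻¹ * (1 - x)⁻¹) := by
    simp only [binEnt]
    field_simp
    ring
  rw [key]
  have : 0 ≤ 1 - binEnt x := by linarith
  positivity

lemma rAux_monotoneOn : MonotoneOn rAux (Ioo (0 : ℝ) (1 / 2)) := by
  apply monotoneOn_of_deriv_nonneg (convex_Ioo _ _)
  · intro x hx
    obtain ⟨d, hd, _⟩ := rAux_hasDerivAt_nonneg hx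
    exact hd.continuousAt.continuousWithinAt
  · rw [interior_Ioo]
    intro x hx
    obtain ⟨d, hd, _⟩ := rAux_hasDerivAt_nonneg hx
    exact hd.differentiableAt.differentiableWithinAt
  · rw [interior_Ioo]
    intro x hx
    obtain ⟨d, hd, hd0⟩ := rAux_hasDerivAt_nonneg hx
    rw [hd.deriv]
    exact hd0

lemma fFun_continuous : Continuous fFun := by
  have : Continuous fun y : ℝ => (1 - y) * Real.log (1 - y) :=
    Real.continuous_mul_log.comp (continuous_const.sub continuous_id)
  exact this.neg

lemma rAux_def (x : ℝ) : rAux x = (1 + Real.log (1 - x)) / (Real.log (1 - x) - Real.log x) := rfl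

lemma fFun_def (y : ℝ) : fFun y = -((1 - y) * Real.log (1 - y)) := rfl

/-- For any function `h2inv` that inverts the binary entropy function restricted to
`[0, 1/2]` (i.e. `h₂⁻¹`), the function `φ` defined by `φ(t) = f(h₂⁻¹(t))` for
`t ∈ [0, log 2]` and `φ(t) = 0` for `t < 0` is convex on `(-∞, log 2]`. -/
theorem stmt_13 (h2inv : ℝ → ℝ)
    (hinv : ∀ x ∈ Set.Icc (0 : ℝ) (1 / 2), h2inv (binEnt x) = x) :
    ConvexOn ℝ (Set.Iic (Real.log 2))
      (fun t => if t < 0 then 0 else fFun (h2inv t)) := by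
  set T : Set ℝ := Icc (0 : ℝ) (Real.log 2) with hTdef
  set φ : ℝ → ℝ := fun t => if t < 0 then 0 else fFun (h2inv t) with hφdef
  have hlog2 : (0 : ℝ) < Real.log 2 := Real.log_pos one_lt_two
  -- surjectivity of binEnt onto [0, log 2]
  have surj : ∀ t ∈ T, ∃ x ∈ Icc (0 : ℝ) (1 / 2), binEnt x = t := by
    intro t ht
    have h := intermediate_value_Icc (by norm_num : (0 : ℝ) ≤ 1 / 2)
      binEnt_continuous.continuousOn
    rw [binEnt_zero, binEnt_half] at h
    obtain ⟨x, hx, hxt⟩ := h ht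
    exact ⟨x, hx, hxt⟩
  have hXT : ∀ t ∈ T, h2inv t ∈ Icc (0 : ℝ) (1 / 2) ∧ binEnt (h2inv t) = t := by
    intro t ht
    obtain ⟨x, hxJ, hxt⟩ := surj t ht
    have h := hinv x hxJ
    rw [hxt] at h
    exact ⟨h ▸ hxJ, by rw [h, hxt]⟩
  have hx0 : h2inv 0 = 0 := by
    have := hinv 0 ⟨le_refl _, by norm_num⟩
    rwa [binEnt_zero] at this
  have hxhalf : h2inv (Real.log 2) = 1 / 2 := by
    have := hinv (1 / 2) ⟨by norm_num, le_refl _⟩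
    rwa [binEnt_half] at this
  have hmono : StrictMonoOn h2inv T := by
    intro a ha b hb hab
    have h1 := hXT a ha
    have h2 := hXT b hb
    have : binEnt (h2inv a) < binEnt (h2inv b) := by rw [h1.2, h2.2]; exact hab
    exact (binEnt_strictMonoOn.lt_iff_lt h1.1 h2.1).mp this
  -- continuity of h2inv on T
  have hcont : ContinuousOn h2inv T := by
    intro a ha
    have hleft : ContinuousWithinAt h2inv (T ∩ Iic a) a := by
      rcases eq_or_lt_of_le ha.1 with h0 | h0
      · have hsub : T ∩ Iic a ⊆ {a} := by
          intro y hy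
          have := hy.1.1
          have := hy.2
          exact le_antisymm hy.2 (h0 ▸ hy.1.1)
        exact (continuousWithinAt_singleton).mono hsub
      · refine ContinuousWithinAt.mono ?_ inter_subset_right
        apply hmono.continuousWithinAt_left_of_exists_between
        · rw [mem_nhdsWithin]
          refine ⟨Ioi 0, isOpen_Ioi, h0, ?_⟩
          intro y hy
          exact ⟨le_of_lt hy.1, le_trans hy.2 ha.2⟩
        · intro b hb
          have hxa_pos : 0 < h2inv a := by
            have := hmono ⟨le_refl _, hlog2.le⟩ ha h0
            rwa [hx0] at this
          have hxa_le : h2inv a ≤ 1 / 2 := (hXT a ha).1.2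
          set x' := max b 0 with hx'
          have hx'lt : x' < h2inv a := max_lt hb hxa_pos
          have hx'J : x' ∈ Icc (0 : ℝ) (1 / 2) :=
            ⟨le_max_right _ _, le_trans hx'lt.le hxa_le⟩
          refine ⟨binEnt x', binEnt_mem_T hx'J, ?_⟩
          rw [hinv x' hx'J]
          exact ⟨le_max_left _ _, hx'lt⟩
    have hright : ContinuousWithinAt h2inv (T ∩ Ici a) a := by
      rcases eq_or_lt_of_le ha.2 with h0 | h0
      · have hsub : T ∩ Ici a ⊆ {a} := by
          intro y hy
          have h1 := hy.1.2
          have h2 := hy.2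
          simp only [mem_singleton_iff]
          rw [h0] at *
          exact le_antisymm h1 h2
        exact (continuousWithinAt_singleton).mono hsub
      · refine ContinuousWithinAt.mono ?_ inter_subset_right
        apply hmono.continuousWithinAt_right_of_exists_between
        · rw [mem_nhdsWithin]
          refine ⟨Iio (Real.log 2), isOpen_Iio, h0, ?_⟩
          intro y hy
          exact ⟨le_trans ha.1 hy.2, le_of_lt hy.1⟩
        · intro b hb
          have hxa_lt : h2inv a < 1 / 2 := by
            have := hmono ha ⟨hlog2.le, le_refl _⟩ h0
            rwa [hxhalf] at this
          have hxa_nonneg : 0 ≤ h2inv a := (hXT a ha).1.1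
          set x' := min b (1 / 2) with hx'
          have hgt : h2inv a < x' := lt_min hb hxa_lt
          have hx'J : x' ∈ Icc (0 : ℝ) (1 / 2) :=
            ⟨le_trans hxa_nonneg hgt.le, min_le_right _ _⟩
          refine ⟨binEnt x', binEnt_mem_T hx'J, ?_⟩
          rw [hinv x' hx'J]
          exact ⟨hgt, min_le_left _ _⟩
    refine ContinuousWithinAt.mono (hleft.union hright) ?_
    intro y hy
    rcases le_total y a with h | h
    · exact Or.inl ⟨hy, h⟩
    · exact Or.inr ⟨hy, h⟩
  -- basic φ facts
  have hφT : ∀ t ∈ T, φ t = fFun (h2inv t) := by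
    intro t ht
    simp [hφdef, not_lt.mpr ht.1]
  have hφ0 : ∀ t ≤ (0 : ℝ), φ t = 0 := by
    intro t ht
    rcases lt_or_eq_of_le ht with h | h
    · simp [hφdef, h]
    · subst h
      simp [hφdef, hx0, fFun_def]
  have hφnn : ∀ t ∈ T, 0 ≤ φ t := by
    intro t ht
    rw [hφT t ht, fFun_def]
    have hw := (hXT t ht).1
    have h1 : (0 : ℝ) ≤ 1 - h2inv t := by linarith [hw.2]
    have h2 : Real.log (1 - h2inv t) ≤ 0 :=
      Real.log_nonpos (by linarith [hw.2]) (by linarith [hw.1])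
    nlinarith [mul_nonneg h1 (neg_nonneg.mpr h2)]
  have hmemIoo : ∀ t ∈ Ioo (0 : ℝ) (Real.log 2), h2inv t ∈ Ioo (0 : ℝ) (1 / 2) := by
    intro t ht
    constructor
    · have := hmono ⟨le_refl _, hlog2.le⟩ ⟨ht.1.le, ht.2.le⟩ ht.1
      rwa [hx0] at this
    · have := hmono ⟨ht.1.le, ht.2.le⟩ ⟨hlog2.le, le_refl _⟩ ht.2
      rwa [hxhalf] at this
  -- derivative of φ on the open interval
  have hDeriv : ∀ t ∈ Ioo (0 : ℝ) (Real.log 2), HasDerivAt φ (rAux (h2inv t)) t := by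
    intro t ht
    have hxIoo := hmemIoo t ht
    have hx1 : h2inv t ≠ 1 := by
      intro h; rw [h] at hxIoo; have := hxIoo.2; norm_num at this
    have hgd : HasDerivAt binEnt
        (Real.log (1 - h2inv t) - Real.log (h2inv t)) (h2inv t) :=
      hasDerivAt_binEnt (ne_of_gt hxIoo.1) hx1
    have hDpos : 0 < Real.log (1 - h2inv t) - Real.log (h2inv t) := by
      have := Real.log_lt_log hxIoo.1 (by linarith [hxIoo.2] : h2inv t < 1 - h2inv t)
      linarith
    have hcat : ContinuousAt h2inv t :=
      hcont.continuousAt (Icc_mem_nhds ht.1 ht.2)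
    have hfg : ∀ᶠ y in 𝓝 t, binEnt (h2inv y) = y := by
      filter_upwards [Ioo_mem_nhds ht.1 ht.2] with y hy
      exact (hXT y ⟨hy.1.le, hy.2.le⟩).2
    have hx' : HasDerivAt h2inv
        (Real.log (1 - h2inv t) - Real.log (h2inv t))⁻¹ t :=
      hgd.of_local_left_inverse hcat (ne_of_gt hDpos) hfg
    have hfd : HasDerivAt fFun (1 + Real.log (1 - h2inv t)) (h2inv t) :=
      hasDerivAt_fFun hx1
    have hcomp : HasDerivAt (fun y => fFun (h2inv y))
        ((1 + Real.log (1 - h2inv t)) *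
          (Real.log (1 - h2inv t) - Real.log (h2inv t))⁻¹) t :=
      hfd.comp t hx'
    have heq : φ =ᶠ[𝓝 t] fun y => fFun (h2inv y) := by
      filter_upwards [Ioi_mem_nhds ht.1] with y hy
      simp [hφdef, not_lt.mpr (mem_Ioi.mp hy).le]
    have := hcomp.congr_of_eventuallyEq heq
    rwa [rAux_def, div_eq_mul_inv]
  -- convexity on [0, log 2]
  have hconvIcc : ConvexOn ℝ T φ := by
    apply MonotoneOn.convexOn_of_deriv (convex_Icc _ _)
    · exact (fFun_continuous.comp_continuousOn hcont).congr hφT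
    · rw [interior_Icc]
      intro t ht
      exact (hDeriv t ht).differentiableAt.differentiableWithinAt
    · rw [interior_Icc]
      intro a ha b hb hab
      rw [(hDeriv a ha).deriv, (hDeriv b hb).deriv]
      exact rAux_monotoneOn (hmemIoo a ha) (hmemIoo b hb)
        (hmono.monotoneOn ⟨ha.1.le, ha.2.le⟩ ⟨hb.1.le, hb.2.le⟩ hab)
  -- glue
  rw [convexOn_iff_slope_mono_adjacent]
  refine ⟨convex_Iic _, ?_⟩
  intro u v w hu hw huv hvw
  have hv : v ≤ Real.log 2 := le_trans hvw.le hw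
  rcases le_or_gt v 0 with hv0 | hv0
  · rw [hφ0 v hv0, hφ0 u (by linarith)]
    have hφw : 0 ≤ φ w := by
      rcases le_or_gt w 0 with h | h
      · rw [hφ0 w h]
      · exact hφnn w ⟨h.le, hw⟩
    rw [sub_self, zero_div, sub_zero]
    exact div_nonneg hφw (by linarith)
  · have hwT : w ∈ T := ⟨by linarith, hw⟩
    rcases le_or_gt 0 u with hu0 | hu0
    · exact hconvIcc.slope_mono_adjacent ⟨hu0, by linarith⟩ hwT huv hvw
    · have h0T : (0 : ℝ) ∈ T := ⟨le_refl _, hlog2.le⟩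
      have key := hconvIcc.slope_mono_adjacent h0T hwT hv0 hvw
      rw [hφ0 0 le_rfl, sub_zero, sub_zero] at key
      rw [hφ0 u hu0.le, sub_zero]
      have hφv : 0 ≤ φ v := hφnn v ⟨hv0.le, hv⟩
      calc φ v / (v - u) ≤ φ v / v := by
            apply div_le_div_of_nonneg_left hφv hv0
            linarith
        _ ≤ _ := key
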